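/- Let p and q be probability mass functions on a finite type V, and suppose q(x) ≥ ε_min for every x ∈ V, where ε_min > 0. If TV(p, q) ≤ ε_min/2, then KL(p‖q) ≤ (2/ε_min)·TV(p, q)². -/

import Mathlib

open Finset

/-- Total variation distance between two pmfs on a finite type. -/
noncomputable def TV {V : Type*} [Fintype V] (p q : V → ℝ) : ℝ :=
  (1 / 2) * ∑ x, |p x - q x|

/-- Kullback–Leibler divergence between two pmfs on a finite type. -/
noncomputable def KL {V : Type*} [Fintype V] (p q : V → ℝ) : ℝ :=
  ∑ x, p x * Real.log (p x / q x)

lemma abs_sub_le_TV {V : Type*} [Fintype V] (p q : V → ℝ)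
    (hp1 : ∑ x, p x = 1) (hq1 : ∑ x, q x = 1) (x : V) :
    |p x - q x| ≤ TV p q := by
  have hsum : ∑ y, (p y - q y) = 0 := by
    rw [Finset.sum_sub_distrib, hp1, hq1]; ring
  have hpos : ∑ y, max (p y - q y) 0 = TV p q := by
    have h : ∀ y : V, max (p y - q y) 0 = (1/2) * (|p y - q y| + (p y - q y)) := by
      intro y
      rcases le_total (p y - q y) 0 with h | h
      · rw [max_eq_right h, abs_of_nonpos h]; ring
      · rw [max_eq_left h, abs_of_nonneg h]; ring
    simp_rw [h]
    rw [← Finset.mul_sum, Finset.sum_add_distrib, hsum, TV]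
    ring
  have hneg : ∑ y, max (q y - p y) 0 = TV p q := by
    have h : ∀ y : V, max (q y - p y) 0 = (1/2) * (|p y - q y| - (p y - q y)) := by
      intro y
      rcases le_total (p y - q y) 0 with h | h
      · rw [max_eq_left (by linarith), abs_of_nonpos h]; ring
      · rw [max_eq_right (by linarith), abs_of_nonneg h]; ring
    simp_rw [h]
    rw [← Finset.mul_sum, Finset.sum_sub_distrib, hsum, TV]
    ring
  have h1 : p x - q x ≤ TV p q := by
    calc p x - q x ≤ max (p x - q x) 0 := le_max_left _ _
      _ ≤ ∑ y, max (p y - q y) 0 :=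
        Finset.single_le_sum (f := fun y => max (p y - q y) 0)
          (fun y _ => le_max_right _ _) (Finset.mem_univ x)
      _ = TV p q := hpos
  have h2 : q x - p x ≤ TV p q := by
    calc q x - p x ≤ max (q x - p x) 0 := le_max_left _ _
      _ ≤ ∑ y, max (q y - p y) 0 :=
        Finset.single_le_sum (f := fun y => max (q y - p y) 0)
          (fun y _ => le_max_right _ _) (Finset.mem_univ x)
      _ = TV p q := hneg
  rw [abs_sub_le_iff]; exact ⟨h1, h2⟩

/-- KL–TV conversion, uniform-floor form: if `q` has floor `εmin` and
`TV(p,q) ≤ εmin/2`, then `KL(p‖q) ≤ (2/εmin)·TV(p,q)²`. -/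
theorem kl_tv_bounded {V : Type*} [Fintype V] (p q : V → ℝ) (εmin : ℝ)
    (hεmin : 0 < εmin)
    (hp0 : ∀ x, 0 ≤ p x) (hp1 : ∑ x, p x = 1)
    (hq0 : ∀ x, 0 ≤ q x) (hq1 : ∑ x, q x = 1)
    (hfloor : ∀ x, εmin ≤ q x)
    (hTV : TV p q ≤ εmin / 2) :
    KL p q ≤ (2 / εmin) * (TV p q) ^ 2 := by
  have hq0' : ∀ x, 0 < q x := fun x => lt_of_lt_of_le hεmin (hfloor x)
  have hsum : ∑ x, (p x - q x) = 0 := by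
    rw [Finset.sum_sub_distrib, hp1, hq1]; ring
  have hTVnn : 0 ≤ TV p q := by
    have : (0:ℝ) ≤ ∑ x, |p x - q x| :=
      Finset.sum_nonneg fun x _ => abs_nonneg _
    rw [TV]; linarith
  have step1 : KL p q ≤ ∑ x, p x * ((p x - q x) / q x) := by
    apply Finset.sum_le_sum
    intro x _
    rcases eq_or_lt_of_le (hp0 x) with h | h
    · simp [← h]
    · have hlog : Real.log (p x / q x) ≤ p x / q x - 1 :=
        Real.log_le_sub_one_of_pos (div_pos h (hq0' x))
      have heq : p x / q x - 1 = (p x - q x) / q x := by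
        rw [sub_div, div_self (hq0' x).ne']
      rw [heq] at hlog
      exact mul_le_mul_of_nonneg_left hlog (hp0 x)
  have step2 : ∑ x, p x * ((p x - q x) / q x)
      = ∑ x, ((p x - q x)^2 / q x) + ∑ x, (p x - q x) := by
    rw [← Finset.sum_add_distrib]
    apply Finset.sum_congr rfl
    intro x _
    have hq := (hq0' x).ne'
    field_simp
    ring
  have hsumabs : ∑ x, |p x - q x| = 2 * TV p q := by rw [TV]; ring
  have step3 : ∑ x, ((p x - q x)^2 / q x) ≤ (2 / εmin) * (TV p q)^2 := by
    have hb : ∀ x ∈ Finset.univ, (p x - q x)^2 / q x ≤ TV p q / εmin * |p x - q x| := by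
      intro x _
      have habs := abs_sub_le_TV p q hp1 hq1 x
      have h1 : (p x - q x)^2 ≤ TV p q * |p x - q x| := by
        nlinarith [abs_nonneg (p x - q x), sq_abs (p x - q x)]
      rw [div_le_iff₀ (hq0' x)]
      have h2 : TV p q * |p x - q x| * (q x / εmin) ≤ TV p q / εmin * |p x - q x| * q x :=
        le_of_eq (by ring)
      have h3 : (1:ℝ) ≤ q x / εmin := (one_le_div hεmin).mpr (hfloor x)
      nlinarith [mul_nonneg hTVnn (abs_nonneg (p x - q x))]
    calc ∑ x, ((p x - q x)^2 / q x) ≤ ∑ x, TV p q / εmin * |p x - q x| :=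
          Finset.sum_le_sum hb
      _ = TV p q / εmin * (2 * TV p q) := by rw [← Finset.mul_sum, hsumabs]
      _ = (2 / εmin) * (TV p q)^2 := by field_simp
  calc KL p q ≤ ∑ x, p x * ((p x - q x) / q x) := step1
    _ = ∑ x, ((p x - q x)^2 / q x) + ∑ x, (p x - q x) := step2
    _ = ∑ x, ((p x - q x)^2 / q x) := by rw [hsum]; ring
    _ ≤ (2 / εmin) * (TV p q)^2 := step3
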